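/- Strongly correspondent trajectories receive equal rewards: let η = ⟨s₀, u₁, s₁, …, u_l, s_l⟩ be a trajectory in the NMRG, and let η' = ⟨s₀', u₁, s₁', …, u_l, s_l'⟩ be its unique lift to the equivalent Markov game, defined by s₀' = ρ(s₀) and s_t' = (q_{1,t},…,q_{M,t}, s_t) with q_{k,t} = δ_k(q_{k,t-1}, L(s_t)) for t ≥ 1. If each DFA A_k accepts a finite word over 2^AP exactly when that word, as a finite trace, satisfies φ_k, then for each k the final component satisfies q_{k,l} ∈ F_k if and only if the label trace L(s₁)⋯L(s_l) satisfies φ_k; consequently the non-Markovian reward R̄(η) = Σ_{k : L(s₁)⋯L(s_l) ⊨ φ_k} r_k equals the Markovian reward R'(s_{l-1}', u_l, s_l') = Σ_{k : q_{k,l} ∈ F_k} r_k collected at the final transition of η'. -/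
import Mathlib


/-- LTL formulas over atoms `α`, with constants `tt`/`ff`, negation, conjunction,
disjunction, next `○` and until `U`. -/
inductive LTL (α : Type) : Type where
  | tt : LTL α
  | ff : LTL α
  | atom : α → LTL α
  | not : LTL α → LTL α
  | and : LTL α → LTL α → LTL α
  | or : LTL α → LTL α → LTL α
  | next : LTL α → LTL α
  | untl : LTL α → LTL α → LTL α

/-- Satisfaction `⟨σ,i⟩ ⊨ φ` over infinite traces `σ : ℕ → Set α`. -/
def SatInf {α : Type} (σ : ℕ → Set α) : ℕ → LTL α → Prop
  | _, .tt => True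
  | _, .ff => False
  | i, .atom p => p ∈ σ i
  | i, .not φ => ¬ SatInf σ i φ
  | i, .and φ ψ => SatInf σ i φ ∧ SatInf σ i ψ
  | i, .or φ ψ => SatInf σ i φ ∨ SatInf σ i ψ
  | i, .next φ => SatInf σ (i + 1) φ
  | i, .untl φ ψ => ∃ j, i ≤ j ∧ SatInf σ j ψ ∧ ∀ k, i ≤ k → k < j → SatInf σ k φ

/-- Satisfaction `⟨σ,i⟩ ⊨ φ` over finite traces `σ : List (Set α)`;
positions of `σ` are the indices `< σ.length`. -/
def SatFin {α : Type} (σ : List (Set α)) : ℕ → LTL α → Prop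
  | _, .tt => True
  | _, .ff => False
  | i, .atom p => p ∈ σ.getD i ∅
  | i, .not φ => ¬ SatFin σ i φ
  | i, .and φ ψ => SatFin σ i φ ∧ SatFin σ i ψ
  | i, .or φ ψ => SatFin σ i φ ∨ SatFin σ i ψ
  | i, .next φ => i + 1 < σ.length ∧ SatFin σ (i + 1) φ
  | i, .untl φ ψ =>
      ∃ j, i ≤ j ∧ j < σ.length ∧ SatFin σ j ψ ∧ ∀ k, i ≤ k → k < j → SatFin σ k φ

/-- The co-safe fragment of LTL: negation on atoms only. -/
inductive CoSafe {α : Type} : LTL α → Prop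
  | atom (p : α) : CoSafe (.atom p)
  | natom (p : α) : CoSafe (.not (.atom p))
  | and {φ ψ : LTL α} : CoSafe φ → CoSafe ψ → CoSafe (.and φ ψ)
  | or {φ ψ : LTL α} : CoSafe φ → CoSafe ψ → CoSafe (.or φ ψ)
  | next {φ : LTL α} : CoSafe φ → CoSafe (.next φ)
  | untl {φ ψ : LTL α} : CoSafe φ → CoSafe ψ → CoSafe (.untl φ ψ)

/-- The finite prefix `σ₀, …, σᵢ` of an infinite trace `σ`. -/
def prefixUpTo {α : Type} (σ : ℕ → Set α) (i : ℕ) : List (Set α) :=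
  (List.range (i + 1)).map σ

/-- Concatenation `w · σ'` of a finite trace with an infinite trace. -/
def appendInf {α : Type} (w : List (Set α)) (σ' : ℕ → Set α) : ℕ → Set α :=
  fun n => w.getD n (σ' (n - w.length))

open Classical in
/-- Strongly correspondent trajectories receive equal rewards.
Here `s : ℕ → S` (with actions `u : ℕ → U`) describes the NMRG trajectory
⟨s₀,u₁,s₁,…,u_l,s_l⟩ and `q : ℕ → ∀ k, Q k` its unique lift, with
q₀ = q⃗₀ and q_{k,t} = δ_k(q_{k,t-1}, L(s_t)).  If each DFA A_k accepts a
finite word over 2^AP exactly when it satisfies φ_k, then q_{k,l} ∈ F_k iff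
the label trace L(s₁)⋯L(s_l) satisfies φ_k, and the non-Markovian reward
Σ_{k : L(s₁)⋯L(s_l) ⊨ φ_k} r_k equals the Markovian reward
Σ_{k : q_{k,l} ∈ F_k} r_k collected at the final transition. -/
theorem strongly_correspondent_equal_rewards {S U AP : Type} {M : ℕ}
    (Q : Fin M → Type) (δ : ∀ k : Fin M, Q k → Set AP → Q k)
    (q₀ : ∀ k, Q k) (F : ∀ k : Fin M, Set (Q k)) (L : S → Set AP)
    (r : Fin M → ℝ) (φ : Fin M → LTL AP) (hφ : ∀ k, CoSafe (φ k))
    (hdfa : ∀ (k : Fin M) (w : List (Set AP)),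
        w.foldl (δ k) (q₀ k) ∈ F k ↔ SatFin w 0 (φ k))
    (l : ℕ) (hl : 1 ≤ l) (s : ℕ → S) (u : ℕ → U)
    (q : ℕ → ∀ k, Q k) (hq0 : q 0 = q₀)
    (hqstep : ∀ (t : ℕ) (k : Fin M), q (t + 1) k = δ k (q t k) (L (s (t + 1)))) :
    (∀ k : Fin M,
        q l k ∈ F k ↔
          SatFin ((List.range l).map (fun t => L (s (t + 1)))) 0 (φ k)) ∧
    (∑ k : Fin M,
        if SatFin ((List.range l).map (fun t => L (s (t + 1)))) 0 (φ k)
          then r k else 0)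
      = ∑ k : Fin M, if q l k ∈ F k then r k else 0 := by
  have key : ∀ t : ℕ, ∀ k : Fin M,
      q t k = ((List.range t).map (fun i => L (s (i + 1)))).foldl (δ k) (q₀ k) := by
    intro t
    induction t with
    | zero => intro k; simp [hq0]
    | succ n ih =>
      intro k
      rw [hqstep n k, ih k, List.range_succ, List.map_append, List.foldl_append]
      simp
  have main : ∀ k : Fin M,
      q l k ∈ F k ↔ SatFin ((List.range l).map (fun t => L (s (t + 1)))) 0 (φ k) := by
    intro k; rw [key l k]; exact hdfa k _
  refine ⟨main, Finset.sum_congr rfl fun k _ => ?_⟩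
  simp [main k]
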